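/- For h(z) = z - (3/10)z², the supremum over z in the unit disk of Re(1 + z h''(z)/h'(z)) equals 11/8. -/

import Mathlib

open Complex Metric

theorem stmt_0 :
    sSup {x : ℝ | ∃ z ∈ ball (0 : ℂ) 1,
      x = (1 + z * ((-3/5 : ℂ)) / (1 - (3/5 : ℂ) * z)).re} = 11/8 := by
  set S := {x : ℝ | ∃ z ∈ ball (0 : ℂ) 1,
      x = (1 + z * ((-3/5 : ℂ)) / (1 - (3/5 : ℂ) * z)).re} with hS
  have hub : ∀ x ∈ S, x ≤ 11/8 := by
    rintro x ⟨z, hz, rfl⟩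
    rw [mem_ball_zero_iff] at hz
    have hz2 : z.re^2 + z.im^2 < 1 := by
      have := Complex.sq_norm z
      rw [Complex.normSq_apply] at this
      nlinarith [hz, norm_nonneg z, this]
    have hne : (1 - (3/5 : ℂ) * z) ≠ 0 := by
      intro h
      have : (3/5 : ℂ) * z = 1 := by linear_combination -h
      have := congrArg (‖·‖) this
      simp [map_mul] at this
      nlinarith [hz]
    have hD : 0 < Complex.normSq (1 - (3/5 : ℂ) * z) := Complex.normSq_pos.mpr hne
    have e1 : ((3:ℂ)/5).re = 3/5 := by norm_num
    have e2 : ((3:ℂ)/5).im = 0 := by norm_num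
    have e3 : ((-3:ℂ)/5).re = -(3/5) := by norm_num
    have e4 : ((-3:ℂ)/5).im = 0 := by norm_num
    rw [Complex.add_re, Complex.div_re]
    rw [Complex.normSq_apply] at hD ⊢
    simp only [Complex.sub_re, Complex.sub_im, Complex.one_re, Complex.one_im,
      Complex.mul_re, Complex.mul_im, e1, e2, e3, e4] at hD ⊢
    rw [← add_div, add_comm, ← le_sub_iff_add_le, div_le_iff₀ hD]
    nlinarith [hz2, sq_nonneg (1 + z.re)]
  have hbdd : BddAbove S := ⟨11/8, hub⟩
  -- value at z = -r
  have hval : ∀ r : ℝ, 0 ≤ r → r < 1 →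
      (1 + (3*r/5)/(1 + 3*r/5)) ∈ S := by
    intro r hr0 hr1
    refine ⟨(-(r:ℝ) : ℂ), ?_, ?_⟩
    · rw [mem_ball_zero_iff]
      rw [norm_neg, Complex.norm_real, Real.norm_eq_abs,
        _root_.abs_of_nonneg hr0]
      exact hr1
    · have hden : (1 + 3*r/5) ≠ 0 := by positivity
      have hdenC : ((1:ℂ) - (3/5) * (-(r:ℝ) : ℂ)) ≠ 0 := by
        intro h
        have : ((1 + 3*r/5 : ℝ) : ℂ) = 0 := by push_cast; linear_combination h
        exact hden (by exact_mod_cast this)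
      have hdenC2 : ((5:ℂ) + (r:ℂ)*3) ≠ 0 := by
        intro h
        have : ((5 + r*3 : ℝ) : ℂ) = 0 := by push_cast; linear_combination h
        have : (5 + r*3 : ℝ) = 0 := by exact_mod_cast this
        linarith
      have : ((1:ℂ) + (-(r:ℝ):ℂ) * ((-3/5 : ℂ)) / (1 - (3/5 : ℂ) * (-(r:ℝ):ℂ)))
          = ((1 + (3*r/5)/(1 + 3*r/5) : ℝ) : ℂ) := by
        rw [eq_comm]
        push_cast
        field_simp
        ring
      rw [this, Complex.ofReal_re]
  have hne : S.Nonempty := ⟨_, hval 0 le_rfl one_pos⟩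
  refine le_antisymm (csSup_le hne hub) ?_
  refine le_of_forall_pos_le_add ?_
  intro ε hε
  set r : ℝ := 1 - min (1/2) ε with hr
  have hr0 : 0 ≤ r := by
    have := min_le_left (1/2 : ℝ) ε; simp only [hr]; linarith
  have hr1 : r < 1 := by
    have := lt_min (by norm_num : (0:ℝ) < 1/2) hε
    simp only [hr]; linarith
  have h3 : 3 - 3*r ≤ 3*ε := by
    have := min_le_right (1/2 : ℝ) ε
    simp only [hr]; linarith
  clear_value r
  have hmem := hval r hr0 hr1
  have hle : (1 + (3*r/5)/(1 + 3*r/5)) ≤ sSup S := le_csSup hbdd hmem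
  have hden : (0:ℝ) < 1 + 3*r/5 := by positivity
  have key : 11/8 - ε ≤ 1 + (3*r/5)/(1 + 3*r/5) := by
    have h1 : 11/8 - (1 + (3*r/5)/(1 + 3*r/5)) = (3 - 3*r)/(8*(1 + 3*r/5)) := by
      field_simp; ring
    have h2 : (3 - 3*r)/(8*(1 + 3*r/5)) ≤ (3 - 3*r)/8 := by
      apply div_le_div_of_nonneg_left (by linarith) (by norm_num) (by linarith)
    linarith [h1, h2, h3, hε]
  linarith
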